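/- arXiv:cond-mat/0205548 — 3 statements merged into one kernel-verified Lean document; each statement's English description precedes it below -/
import Mathlib

section
/- (Region C₊ of the atomic-limit phase diagram) Let r = 2. Assume W > 0, I > 0, and max(I, zW/2 − I) < μ < zW/2 + I. Then H(C) = H_i^0(C) − μ·N_i(C) attains its minimum over all ion configurations exactly at the configurations for which there is a sublattice (Λᵉ or Λᵒ) with n_x = 2 at each of its sites while n_x = 1 (either species) at each site of the complementary sublattice; the number of such minimizing configurations equals 2^{|Λᵉ|} + 2^{|Λᵒ|}. -/
open Finset

/-- Occupation number (0 or 1) attached to a Boolean occupancy variable. -/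
noncomputable def occ (b : Bool) : ℝ := if b then 1 else 0

/-- Total number of ions at site `x` (as a real number): `n_x = Σ_σ n_{x,σ}`. -/
noncomputable def nsite {V : Type*} {r : ℕ} (C : V → Fin r → Bool) (x : V) : ℝ :=
  ∑ σ : Fin r, occ (C x σ)

/-- Total number of ions at site `x` (as a natural number). -/
def nnat {V : Type*} {r : ℕ} (C : V → Fin r → Bool) (x : V) : ℕ :=
  ∑ σ : Fin r, (if C x σ then 1 else 0)

/-- The classical Hamiltonian
`H_i^0(C) = 2I Σ_x Σ_{σ'<σ''} (n_{x,σ'} - 1/2)(n_{x,σ''} - 1/2)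
          + (W/2) Σ_{⟨x,y⟩} (n_x - r/2)(n_y - r/2)`,
where the sum over edges `⟨x,y⟩` (each edge counted once) is written as half the
symmetric double sum over ordered adjacent pairs. -/
noncomputable def H0 {V : Type*} [Fintype V] (G : SimpleGraph V) [DecidableRel G.Adj]
    (r : ℕ) (I W : ℝ) (C : V → Fin r → Bool) : ℝ :=
  2 * I * ∑ x : V, ∑ p ∈ Finset.univ.filter (fun p : Fin r × Fin r => p.1 < p.2),
      (occ (C x p.1) - 1 / 2) * (occ (C x p.2) - 1 / 2)
  + W / 2 * ((∑ x : V, ∑ y : V,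
      (if G.Adj x y then (nsite C x - r / 2) * (nsite C y - r / 2) else 0)) / 2)

/-- Total ion number `N_i(C) = Σ_{x,σ} n_{x,σ}` (as a real number). -/
noncomputable def Ni {V : Type*} {r : ℕ} [Fintype V] (C : V → Fin r → Bool) : ℝ :=
  ∑ x : V, ∑ σ : Fin r, occ (C x σ)

/-- Grand-canonical classical Hamiltonian `H(C) = H_i^0(C) − μ·N_i(C)` for two species. -/
noncomputable def Hgc {V : Type*} [Fintype V] (G : SimpleGraph V) [DecidableRel G.Adj]
    (I W μ : ℝ) (C : V → Fin 2 → Bool) : ℝ :=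
  H0 G 2 I W C - μ * Ni C

noncomputable def msite {V : Type*} (C : V → Fin 2 → Bool) (x : V) : ℝ := nsite C x - 1

lemma msite_mem {V : Type*} (C : V → Fin 2 → Bool) (x : V) :
    msite C x = -1 ∨ msite C x = 0 ∨ msite C x = 1 := by
  rcases hb0 : C x 0 <;> rcases hb1 : C x 1 <;>
    simp only [msite, nsite, occ, Fin.sum_univ_two, hb0, hb1, if_true, if_false] <;> norm_num

lemma msite_one_iff {V : Type*} (C : V → Fin 2 → Bool) (x : V) :
    msite C x = 1 ↔ nnat C x = 2 := by
  rcases hb0 : C x 0 <;> rcases hb1 : C x 1 <;>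
    simp only [msite, nsite, nnat, occ, Fin.sum_univ_two, hb0, hb1, if_true, if_false] <;> norm_num

lemma msite_zero_iff {V : Type*} (C : V → Fin 2 → Bool) (x : V) :
    msite C x = 0 ↔ nnat C x = 1 := by
  rcases hb0 : C x 0 <;> rcases hb1 : C x 1 <;>
    simp only [msite, nsite, nnat, occ, Fin.sum_univ_two, hb0, hb1, if_true, if_false] <;> norm_num

lemma nnat_one_iff {V : Type*} (C : V → Fin 2 → Bool) (x : V) :
    nnat C x = 1 ↔ C x 1 = !C x 0 := by
  rcases hb0 : C x 0 <;> rcases hb1 : C x 1 <;>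
    simp only [nnat, Fin.sum_univ_two, hb0, hb1] <;> simp

lemma nnat_two_iff {V : Type*} (C : V → Fin 2 → Bool) (x : V) :
    nnat C x = 2 ↔ C x 0 = true ∧ C x 1 = true := by
  rcases hb0 : C x 0 <;> rcases hb1 : C x 1 <;>
    simp only [nnat, Fin.sum_univ_two, hb0, hb1] <;> simp

noncomputable def pairE (z : ℕ) (I W μ a b : ℝ) : ℝ :=
  (I * a ^ 2 - μ * a + (I * b ^ 2 - μ * b)) / (2 * z) + W / 4 * (a * b)

lemma sum_adj_left {V : Type*} [Fintype V] (G : SimpleGraph V) [DecidableRel G.Adj]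
    (z : ℕ) (hreg : G.IsRegularOfDegree z) (g : V → ℝ) :
    ∑ x : V, ∑ y : V, (if G.Adj x y then g x else 0) = z * ∑ x : V, g x := by
  rw [Finset.mul_sum]
  refine Finset.sum_congr rfl fun x _ => ?_
  rw [Finset.sum_ite, Finset.sum_const_zero, add_zero, Finset.sum_const,
    ← SimpleGraph.neighborFinset_eq_filter]
  rw [show (G.neighborFinset x).card = z from hreg x, nsmul_eq_mul]

lemma sum_adj_right {V : Type*} [Fintype V] (G : SimpleGraph V) [DecidableRel G.Adj]
    (z : ℕ) (hreg : G.IsRegularOfDegree z) (g : V → ℝ) :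
    ∑ x : V, ∑ y : V, (if G.Adj x y then g y else 0) = z * ∑ x : V, g x := by
  rw [Finset.sum_comm]
  rw [← sum_adj_left G z hreg g]
  refine Finset.sum_congr rfl fun y _ => Finset.sum_congr rfl fun x _ => ?_
  by_cases h : G.Adj x y
  · rw [if_pos h, if_pos (G.adj_symm h)]
  · rw [if_neg h, if_neg fun h' => h (G.adj_symm h')]

lemma Hgc_pair {V : Type*} [Fintype V] (G : SimpleGraph V) [DecidableRel G.Adj]
    (z : ℕ) (hz : 0 < z) (hreg : G.IsRegularOfDegree z) (I W μ : ℝ)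
    (C : V → Fin 2 → Bool) :
    Hgc G I W μ C = (Fintype.card V : ℝ) * (-(I / 2) - μ)
      + ∑ x : V, ∑ y : V,
          (if G.Adj x y then pairE z I W μ (msite C x) (msite C y) else 0) := by
  have hzR : (0:ℝ) < (z : ℝ) := by exact_mod_cast hz
  have hfil : (Finset.univ.filter (fun p : Fin 2 × Fin 2 => p.1 < p.2))
      = {((0 : Fin 2), (1 : Fin 2))} := by decide
  -- step 1 : one-body part
  have key : ∀ x : V,
      2 * I * ((occ (C x 0) - 1/2) * (occ (C x 1) - 1/2))
        - μ * (occ (C x 0) + occ (C x 1))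
      = (-(I/2) - μ) + (I * msite C x ^ 2 - μ * msite C x) := by
    intro x
    rcases hb0 : C x 0 <;> rcases hb1 : C x 1 <;>
      simp only [msite, nsite, occ, Fin.sum_univ_two, hb0, hb1] <;> norm_num <;> ring
  have hms : ∀ x y : V,
      (if G.Adj x y then (nsite C x - (2:ℕ) / 2) * (nsite C y - (2:ℕ) / 2) else 0)
      = (if G.Adj x y then msite C x * msite C y else 0) := by
    intro x y
    split
    · unfold msite; push_cast; ring
    · rfl
  have e1 : Hgc G I W μ C
      = ∑ x : V, ((-(I/2) - μ) + (I * msite C x ^ 2 - μ * msite C x))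
        + W / 4 * ∑ x : V, ∑ y : V, (if G.Adj x y then msite C x * msite C y else 0) := by
    unfold Hgc H0 Ni
    rw [hfil]
    simp only [Finset.sum_singleton, Fin.sum_univ_two, hms]
    simp only [← key]
    rw [Finset.mul_sum, Finset.mul_sum, add_sub_right_comm, ← Finset.sum_sub_distrib]
    ring
  rw [e1, Finset.sum_add_distrib, Finset.sum_const, Finset.card_univ, nsmul_eq_mul]
  -- step 2 : pairize the one-body sum
  have hsplit : ∀ x y : V,
      (if G.Adj x y then pairE z I W μ (msite C x) (msite C y) else 0)
      = (if G.Adj x y then (I * msite C x ^ 2 - μ * msite C x) / (2 * z) else 0)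
        + (if G.Adj x y then (I * msite C y ^ 2 - μ * msite C y) / (2 * z) else 0)
        + (if G.Adj x y then W / 4 * (msite C x * msite C y) else 0) := by
    intro x y
    split
    · unfold pairE; ring
    · simp
  simp only [hsplit, Finset.sum_add_distrib]
  rw [sum_adj_left G z hreg, sum_adj_right G z hreg,
    show (∑ x : V, (I * msite C x ^ 2 - μ * msite C x) / (2 * (z:ℝ)))
      = (∑ x : V, (I * msite C x ^ 2 - μ * msite C x)) / (2 * (z:ℝ)) from
        (Finset.sum_div _ _ _).symm]
  have h3 : ∀ x y : V, (if G.Adj x y then W / 4 * (msite C x * msite C y) else 0)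
      = W / 4 * (if G.Adj x y then msite C x * msite C y else 0) := by
    intro x y; split <;> simp
  simp only [h3, ← Finset.mul_sum]
  field_simp
  ring

lemma pair_bound (z : ℕ) (hz : 2 ≤ z) (I W μ : ℝ) (hW : 0 < W) (hI : 0 < I)
    (hmuI : I < μ) (hmuW : (z:ℝ) * W / 2 - I < μ) (hmu2 : μ < (z:ℝ) * W / 2 + I)
    (a b : ℝ) (ha : a = -1 ∨ a = 0 ∨ a = 1) (hb : b = -1 ∨ b = 0 ∨ b = 1) :
    (I - μ) / (2 * z) ≤ pairE z I W μ a b ∧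
      (pairE z I W μ a b = (I - μ) / (2 * z) ↔ (a = 1 ∧ b = 0) ∨ (a = 0 ∧ b = 1)) := by
  have hz2 : (2:ℝ) ≤ (z:ℝ) := by exact_mod_cast hz
  have hz0 : (0:ℝ) < 2 * z := by linarith
  have hrw : pairE z I W μ a b
      = (I * a ^ 2 - μ * a + (I * b ^ 2 - μ * b) - (I - μ) + W * z / 2 * (a * b)) / (2 * z)
        + (I - μ) / (2 * z) := by
    unfold pairE; field_simp; ring
  set q := I * a ^ 2 - μ * a + (I * b ^ 2 - μ * b) - (I - μ) + W * z / 2 * (a * b) with hq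
  have hge : 0 ≤ q := by
    rcases ha with ha|ha|ha <;> rcases hb with hb|hb|hb <;> subst_vars <;> rw [hq] <;>
      nlinarith
  have hiff : q = 0 ↔ (a = 1 ∧ b = 0) ∨ (a = 0 ∧ b = 1) := by
    rcases ha with ha|ha|ha <;> rcases hb with hb|hb|hb <;> subst_vars <;> rw [hq] <;>
      norm_num <;> first | linarith | (intro h; nlinarith) | nlinarith
  constructor
  · rw [hrw]
    have : 0 ≤ q / (2 * z) := div_nonneg hge hz0.le
    linarith
  · rw [hrw, add_eq_right, div_eq_zero_iff, or_iff_left (ne_of_gt hz0)]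
    exact hiff

lemma card_half {V : Type*} [Fintype V] [DecidableEq V] (A B : Finset V)
    (hcov : ∀ v : V, v ∈ A ∨ v ∈ B) (hd : Disjoint A B) :
    Nat.card {C : V → Fin 2 → Bool | (∀ x ∈ A, nnat C x = 2) ∧ (∀ x ∈ B, nnat C x = 1)}
      = 2 ^ B.card := by
  classical
  have hAB : ∀ v : V, v ∉ B → v ∈ A := fun v hv => (hcov v).resolve_right hv
  let Cf : ({x : V // x ∈ B} → Bool) → (V → Fin 2 → Bool) := fun f x σ =>
    if hx : x ∈ B then (if σ = 0 then f ⟨x, hx⟩ else !f ⟨x, hx⟩) else true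
  have hCf : ∀ f, (∀ x ∈ A, nnat (Cf f) x = 2) ∧ (∀ x ∈ B, nnat (Cf f) x = 1) := by
    intro f
    constructor
    · intro x hx
      have hxB : x ∉ B := fun h => (Finset.disjoint_left.mp hd hx) h
      rw [nnat_two_iff]
      simp [Cf, hxB]
    · intro x hx
      rw [nnat_one_iff]
      simp [Cf, hx]
  have e : {C : V → Fin 2 → Bool | (∀ x ∈ A, nnat C x = 2) ∧ (∀ x ∈ B, nnat C x = 1)}
      ≃ ({x : V // x ∈ B} → Bool) :=
    { toFun := fun C b => C.1 b.1 0
      invFun := fun f => ⟨Cf f, hCf f⟩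
      left_inv := by
        rintro ⟨C, hC⟩
        apply Subtype.ext
        funext x σ
        by_cases hx : x ∈ B
        · have h1 := (nnat_one_iff C x).mp (hC.2 x hx)
          fin_cases σ <;> simp [Cf, hx, h1]
        · have h2 := (nnat_two_iff C x).mp (hC.1 x (hAB x hx))
          fin_cases σ <;> simp [Cf, hx, h2.1, h2.2]
      right_inv := by
        intro f
        funext b
        simp [Cf, b.2] }
  rw [Nat.card_congr e, Nat.card_eq_fintype_card, Fintype.card_fun, Fintype.card_bool,
    Fintype.card_coe]

/-- **Region C₊.** For `W > 0`, `I > 0` and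
`max(I, zW/2 − I) < μ < zW/2 + I`, the minimizers of `H(C) = H_i^0(C) − μ·N_i(C)` are
exactly the configurations with `n_x = 2` on one sublattice and `n_x = 1` (either
species) on the other; their number is `2^{|Λᵉ|} + 2^{|Λᵒ|}`. -/
theorem statement17
    {V : Type*} [Fintype V] [DecidableEq V]
    (G : SimpleGraph V) [DecidableRel G.Adj]
    (z : ℕ) (hz : 2 ≤ z)
    (hreg : G.IsRegularOfDegree z) (hconn : G.Connected)
    (Λe Λo : Finset V)
    (hcover : ∀ v : V, v ∈ Λe ∨ v ∈ Λo) (hdisj : Disjoint Λe Λo)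
    (hbip : ∀ x y : V, G.Adj x y → (x ∈ Λe ∧ y ∈ Λo) ∨ (x ∈ Λo ∧ y ∈ Λe))
    (I W μ : ℝ) (hW : 0 < W) (hI : 0 < I)
    (hmu1 : max I ((z : ℝ) * W / 2 - I) < μ) (hmu2 : μ < (z : ℝ) * W / 2 + I) :
    {C : V → Fin 2 → Bool | ∀ C' : V → Fin 2 → Bool, Hgc G I W μ C ≤ Hgc G I W μ C'} =
      {C : V → Fin 2 → Bool |
        ((∀ x ∈ Λe, nnat C x = 2) ∧ (∀ x ∈ Λo, nnat C x = 1)) ∨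
        ((∀ x ∈ Λe, nnat C x = 1) ∧ (∀ x ∈ Λo, nnat C x = 2))} ∧
    Nat.card {C : V → Fin 2 → Bool |
        ∀ C' : V → Fin 2 → Bool, Hgc G I W μ C ≤ Hgc G I W μ C'} =
      2 ^ Λe.card + 2 ^ Λo.card := by
  classical
  have hz0 : 0 < z := by omega
  have hmuI : I < μ := lt_of_le_of_lt (le_max_left _ _) hmu1
  have hmuW : (z : ℝ) * W / 2 - I < μ := lt_of_le_of_lt (le_max_right _ _) hmu1
  have hdisj' : ∀ v ∈ Λe, v ∉ Λo := fun v hv => Finset.disjoint_left.mp hdisj hv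
  have hnbr : ∀ x : V, ∃ y, G.Adj x y := by
    intro x
    obtain ⟨y, hy⟩ := Finset.card_pos.mp (show 0 < (G.neighborFinset x).card by
      rw [SimpleGraph.card_neighborFinset_eq_degree, hreg x]; omega)
    exact ⟨y, (SimpleGraph.mem_neighborFinset _ _ _).mp hy⟩
  set K : ℝ := (Fintype.card V : ℝ) * (-(I / 2) - μ) with hK
  set L : ℝ := ∑ x : V, ∑ y : V, (if G.Adj x y then (I - μ) / (2 * (z : ℝ)) else 0) with hL
  have hpb := fun (C : V → Fin 2 → Bool) (x y : V) =>
    pair_bound z hz I W μ hW hI hmuI hmuW hmu2 (msite C x) (msite C y)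
      (msite_mem C x) (msite_mem C y)
  -- lower bound
  have hlb : ∀ C, K + L ≤ Hgc G I W μ C := by
    intro C
    rw [Hgc_pair G z hz0 hreg I W μ C]
    refine add_le_add le_rfl ?_
    refine Finset.sum_le_sum fun x _ => Finset.sum_le_sum fun y _ => ?_
    split
    · exact (hpb C x y).1
    · exact le_rfl
  -- equality characterization
  have hchar : ∀ C, Hgc G I W μ C = K + L ↔ (∀ x y : V, G.Adj x y →
      (msite C x = 1 ∧ msite C y = 0) ∨ (msite C x = 0 ∧ msite C y = 1)) := by
    intro C
    rw [Hgc_pair G z hz0 hreg I W μ C, add_right_inj, hL,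
      ← Finset.sum_product', ← Finset.sum_product', eq_comm]
    rw [Finset.sum_eq_sum_iff_of_le (fun p _ => by
      by_cases h : G.Adj p.1 p.2
      · rw [if_pos h, if_pos h]; exact (hpb C p.1 p.2).1
      · rw [if_neg h, if_neg h])]
    constructor
    · intro h x y hxy
      have := h (x, y) (Finset.mem_product.mpr ⟨Finset.mem_univ _, Finset.mem_univ _⟩)
      rw [if_pos hxy, if_pos hxy] at this
      exact ((hpb C x y).2).mp this.symm
    · intro h p _
      by_cases hxy : G.Adj p.1 p.2
      · rw [if_pos hxy, if_pos hxy]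
        exact (((hpb C p.1 p.2).2).mpr (h p.1 p.2 hxy)).symm
      · rw [if_neg hxy, if_neg hxy]
  -- the RHS predicate implies the good-pair condition
  have hRHSgood : ∀ C : V → Fin 2 → Bool,
      (((∀ x ∈ Λe, nnat C x = 2) ∧ (∀ x ∈ Λo, nnat C x = 1)) ∨
       ((∀ x ∈ Λe, nnat C x = 1) ∧ (∀ x ∈ Λo, nnat C x = 2))) →
      ∀ x y : V, G.Adj x y →
        (msite C x = 1 ∧ msite C y = 0) ∨ (msite C x = 0 ∧ msite C y = 1) := by
    intro C hC x y hxy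
    rcases hbip x y hxy with ⟨hx, hy⟩ | ⟨hx, hy⟩ <;> rcases hC with ⟨h2, h1⟩ | ⟨h1, h2⟩
    · exact Or.inl ⟨(msite_one_iff C x).mpr (h2 x hx), (msite_zero_iff C y).mpr (h1 y hy)⟩
    · exact Or.inr ⟨(msite_zero_iff C x).mpr (h1 x hx), (msite_one_iff C y).mpr (h2 y hy)⟩
    · exact Or.inr ⟨(msite_zero_iff C x).mpr (h1 x hx), (msite_one_iff C y).mpr (h2 y hy)⟩
    · exact Or.inl ⟨(msite_one_iff C x).mpr (h2 x hx), (msite_zero_iff C y).mpr (h1 y hy)⟩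
  -- candidate configuration
  set C0 : V → Fin 2 → Bool := fun x σ => if x ∈ Λe then true else decide (σ = 0) with hC0
  have hC0mem : (∀ x ∈ Λe, nnat C0 x = 2) ∧ (∀ x ∈ Λo, nnat C0 x = 1) := by
    constructor
    · intro x hx
      rw [nnat_two_iff]
      simp [hC0, hx]
    · intro x hx
      have hxe : x ∉ Λe := fun h => hdisj' x h hx
      rw [nnat_one_iff]
      simp [hC0, hxe]
  have hminval : Hgc G I W μ C0 = K + L :=
    (hchar C0).mpr (hRHSgood C0 (Or.inl hC0mem))
  have hmin : ∀ C : V → Fin 2 → Bool,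
      (∀ C', Hgc G I W μ C ≤ Hgc G I W μ C') ↔ Hgc G I W μ C = K + L := by
    intro C
    constructor
    · intro h
      exact le_antisymm (hminval ▸ h C0) (hlb C)
    · intro h C'
      rw [h]
      exact hlb C'
  -- good-pair condition implies the RHS predicate (via connectivity)
  have hgoodRHS : ∀ C : V → Fin 2 → Bool,
      (∀ x y : V, G.Adj x y →
        (msite C x = 1 ∧ msite C y = 0) ∨ (msite C x = 0 ∧ msite C y = 1)) →
      (((∀ x ∈ Λe, nnat C x = 2) ∧ (∀ x ∈ Λo, nnat C x = 1)) ∨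
       ((∀ x ∈ Λe, nnat C x = 1) ∧ (∀ x ∈ Λo, nnat C x = 2))) := by
    intro C hg
    have hstep : ∀ x y : V, G.Adj x y →
        msite C y = 1 - msite C x ∧ (x ∈ Λe ↔ y ∉ Λe) := by
      intro x y hxy
      constructor
      · rcases hg x y hxy with ⟨h1, h2⟩ | ⟨h1, h2⟩ <;> rw [h1, h2] <;> norm_num
      · rcases hbip x y hxy with ⟨hx, hy⟩ | ⟨hx, hy⟩
        · exact ⟨fun _ h => hdisj' y h hy, fun _ => hx⟩
        · exact ⟨fun h => (hdisj' x h hx).elim, fun h => absurd hy h⟩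
    have hwalk : ∀ x y : V, G.Walk x y →
        (msite C y = msite C x ∧ (x ∈ Λe ↔ y ∈ Λe)) ∨
        (msite C y = 1 - msite C x ∧ (x ∈ Λe ↔ y ∉ Λe)) := by
      intro x y w
      induction w with
      | nil => exact Or.inl ⟨rfl, Iff.rfl⟩
      | cons hadj w ih =>
        obtain ⟨hm, hp⟩ := hstep _ _ hadj
        rcases ih with ⟨hm2, hp2⟩ | ⟨hm2, hp2⟩
        · refine Or.inr ⟨by rw [hm2, hm], ?_⟩
          tauto
        · refine Or.inl ⟨by rw [hm2, hm]; ring, ?_⟩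
          tauto
    obtain ⟨v0⟩ := hconn.nonempty
    obtain ⟨y0, hy0⟩ := hnbr v0
    have hm0 : msite C v0 = 0 ∨ msite C v0 = 1 := by
      rcases hg v0 y0 hy0 with ⟨h1, _⟩ | ⟨h1, _⟩
      · exact Or.inr h1
      · exact Or.inl h1
    have hall : ∀ x : V, (msite C x = msite C v0 ∧ (v0 ∈ Λe ↔ x ∈ Λe)) ∨
        (msite C x = 1 - msite C v0 ∧ (v0 ∈ Λe ↔ x ∉ Λe)) := fun x =>
      (hconn.preconnected v0 x).elim fun w => hwalk v0 x w
    by_cases hv0 : v0 ∈ Λe <;> rcases hm0 with hm0 | hm0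
    · -- v0 ∈ Λe, msite v0 = 0 : n = 1 on Λe, 2 on Λo
      refine Or.inr ⟨fun x hx => ?_, fun x hx => ?_⟩
      · rcases hall x with ⟨he, _⟩ | ⟨_, hp⟩
        · exact (msite_zero_iff C x).mp (by rw [he, hm0])
        · exact absurd hx (hp.mp hv0)
      · have hxe : x ∉ Λe := fun h => hdisj' x h hx
        rcases hall x with ⟨_, hp⟩ | ⟨he, _⟩
        · exact absurd (hp.mp hv0) hxe
        · exact (msite_one_iff C x).mp (by rw [he, hm0]; norm_num)
    · -- v0 ∈ Λe, msite v0 = 1 : n = 2 on Λe, 1 on Λo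
      refine Or.inl ⟨fun x hx => ?_, fun x hx => ?_⟩
      · rcases hall x with ⟨he, _⟩ | ⟨_, hp⟩
        · exact (msite_one_iff C x).mp (by rw [he, hm0])
        · exact absurd hx (hp.mp hv0)
      · have hxe : x ∉ Λe := fun h => hdisj' x h hx
        rcases hall x with ⟨_, hp⟩ | ⟨he, _⟩
        · exact absurd (hp.mp hv0) hxe
        · exact (msite_zero_iff C x).mp (by rw [he, hm0]; norm_num)
    ·
      -- v0 ∈ Λo with msite v0 = 0 : Λo has n = 1, Λe has msite = 1, n = 2
      refine Or.inl ⟨fun x hx => ?_, fun x hx => ?_⟩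
      · rcases hall x with ⟨_, hp⟩ | ⟨he, _⟩
        · exact absurd (hp.mpr hx) hv0
        · exact (msite_one_iff C x).mp (by rw [he, hm0]; norm_num)
      · have hxe : x ∉ Λe := fun h => hdisj' x h hx
        rcases hall x with ⟨he, _⟩ | ⟨_, hp⟩
        · exact (msite_zero_iff C x).mp (by rw [he, hm0])
        · exact absurd hxe fun h => hv0 (hp.mpr h)
    · -- v0 ∈ Λo, msite v0 = 1 : Λo has n = 2, Λe has n = 1
      refine Or.inr ⟨fun x hx => ?_, fun x hx => ?_⟩
      · rcases hall x with ⟨_, hp⟩ | ⟨he, _⟩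
        · exact absurd (hp.mpr hx) hv0
        · exact (msite_zero_iff C x).mp (by rw [he, hm0]; norm_num)
      · have hxe : x ∉ Λe := fun h => hdisj' x h hx
        rcases hall x with ⟨he, _⟩ | ⟨_, hp⟩
        · exact (msite_one_iff C x).mp (by rw [he, hm0])
        · exact absurd hxe fun h => hv0 (hp.mpr h)
  -- set equality
  have hset : {C : V → Fin 2 → Bool | ∀ C' : V → Fin 2 → Bool,
        Hgc G I W μ C ≤ Hgc G I W μ C'} =
      {C : V → Fin 2 → Bool |
        ((∀ x ∈ Λe, nnat C x = 2) ∧ (∀ x ∈ Λo, nnat C x = 1)) ∨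
        ((∀ x ∈ Λe, nnat C x = 1) ∧ (∀ x ∈ Λo, nnat C x = 2))} := by
    ext C
    simp only [Set.mem_setOf_eq]
    rw [hmin C]
    constructor
    · intro h
      exact hgoodRHS C ((hchar C).mp h)
    · intro h
      exact (hchar C).mpr (hRHSgood C h)
  refine ⟨hset, ?_⟩
  rw [hset]
  -- nonemptiness of the sublattices
  have hΛe : Λe.Nonempty := by
    obtain ⟨v0⟩ := hconn.nonempty
    obtain ⟨y, hy⟩ := hnbr v0
    rcases hbip v0 y hy with ⟨h1, _⟩ | ⟨_, h2⟩
    · exact ⟨v0, h1⟩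
    · exact ⟨y, h2⟩
  -- counting
  have hsplitEq : {C : V → Fin 2 → Bool |
        ((∀ x ∈ Λe, nnat C x = 2) ∧ (∀ x ∈ Λo, nnat C x = 1)) ∨
        ((∀ x ∈ Λe, nnat C x = 1) ∧ (∀ x ∈ Λo, nnat C x = 2))}
      = {C : V → Fin 2 → Bool | (∀ x ∈ Λe, nnat C x = 2) ∧ (∀ x ∈ Λo, nnat C x = 1)}
        ∪ {C : V → Fin 2 → Bool | (∀ x ∈ Λo, nnat C x = 2) ∧ (∀ x ∈ Λe, nnat C x = 1)} := by
    ext C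
    simp only [Set.mem_setOf_eq, Set.mem_union]
    tauto
  have hdisjsets : Disjoint
      {C : V → Fin 2 → Bool | (∀ x ∈ Λe, nnat C x = 2) ∧ (∀ x ∈ Λo, nnat C x = 1)}
      {C : V → Fin 2 → Bool | (∀ x ∈ Λo, nnat C x = 2) ∧ (∀ x ∈ Λe, nnat C x = 1)} := by
    rw [Set.disjoint_left]
    rintro C ⟨h1, _⟩ ⟨_, h2⟩
    obtain ⟨x, hx⟩ := hΛe
    have := h1 x hx
    have := h2 x hx
    omega
  rw [hsplitEq, Nat.card_coe_set_eq,
    Set.ncard_union_eq hdisjsets (Set.toFinite _) (Set.toFinite _),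
    ← Nat.card_coe_set_eq, ← Nat.card_coe_set_eq,
    card_half Λe Λo hcover hdisj,
    card_half Λo Λe (fun v => (hcover v).symm) hdisj.symm]
  omega
end

section
/- (Region D₊ of the atomic-limit phase diagram) Let r = 2. Assume W > 0, I ≥ 0, and μ > zW/2 + I. Then H(C) = H_i^0(C) − μ·N_i(C) attains its minimum over all ion configurations at exactly one configuration: the fully occupied configuration with n_{x,σ} = 1 for all x ∈ Λ and σ ∈ {↑,↓}. -/
open Finset

section Aux

variable {V : Type*} [Fintype V]

lemma occ_le_one (b : Bool) : occ b ≤ 1 := by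
  unfold occ; split <;> norm_num

lemma occ_nonneg (b : Bool) : 0 ≤ occ b := by
  unfold occ; split <;> norm_num

lemma nsite_two (C : V → Fin 2 → Bool) (x : V) :
    nsite C x = occ (C x 0) + occ (C x 1) := by
  simp [nsite, Fin.sum_univ_two]

lemma nsite_le_two (C : V → Fin 2 → Bool) (x : V) : nsite C x ≤ 2 := by
  rw [nsite_two]
  have := occ_le_one (C x 0); have := occ_le_one (C x 1); linarith

lemma pair_filter_eq :
    (Finset.univ.filter (fun p : Fin 2 × Fin 2 => p.1 < p.2)) = {((0 : Fin 2), (1 : Fin 2))} := by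
  decide

lemma pair_sum (f : Fin 2 × Fin 2 → ℝ) :
    ∑ p ∈ Finset.univ.filter (fun p : Fin 2 × Fin 2 => p.1 < p.2), f p = f (0, 1) := by
  rw [pair_filter_eq, Finset.sum_singleton]

lemma sum_adj_const (G : SimpleGraph V) [DecidableRel G.Adj] {z : ℕ}
    (hreg : G.IsRegularOfDegree z) (x : V) (c : ℝ) :
    ∑ y : V, (if G.Adj x y then c else 0) = z * c := by
  rw [← Finset.sum_filter, ← SimpleGraph.neighborFinset_eq_filter, Finset.sum_const]
  have hc : (G.neighborFinset x).card = z := hreg x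
  rw [hc, nsmul_eq_mul]

lemma onsite_bound (a b : Bool) :
    1 / 4 - ((1 - occ a) + (1 - occ b)) / 2 ≤ (occ a - 1 / 2) * (occ b - 1 / 2) := by
  cases a <;> cases b <;> norm_num [occ]

/-- Key energy estimate: the fully occupied configuration plus the deficit penalty
is below any configuration. -/
lemma key_bound (G : SimpleGraph V) [DecidableRel G.Adj] {z : ℕ}
    (hreg : G.IsRegularOfDegree z) (I W μ : ℝ) (hW : 0 ≤ W) (hI : 0 ≤ I)
    (C : V → Fin 2 → Bool) :
    Hgc G I W μ (fun _ _ => true) + (μ - I - (z : ℝ) * W / 2) * (∑ x : V, (2 - nsite C x))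
      ≤ Hgc G I W μ C := by
  classical
  set E : ℝ := ∑ x : V, (2 - nsite C x) with hEdef
  set κ : ℝ := (Fintype.card V : ℝ) with hκ
  -- onsite sums
  have hS1 : (κ / 4 - E / 2 : ℝ) ≤ ∑ x : V, (occ (C x 0) - 1 / 2) * (occ (C x 1) - 1 / 2) := by
    have h : ∀ x : V, 1 / 4 - (2 - nsite C x) / 2
        ≤ (occ (C x 0) - 1 / 2) * (occ (C x 1) - 1 / 2) := by
      intro x
      have := onsite_bound (C x 0) (C x 1)
      rw [nsite_two]; linarith
    calc (κ / 4 - E / 2 : ℝ) = ∑ x : V, (1 / 4 - (2 - nsite C x) / 2) := by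
          rw [Finset.sum_sub_distrib, Finset.sum_const, hEdef, ← Finset.sum_div]
          simp [hκ]; ring
      _ ≤ _ := Finset.sum_le_sum fun x _ => h x
  -- edge double sum
  have hDS : (z : ℝ) * κ - 2 * z * E ≤
      ∑ x : V, ∑ y : V, (if G.Adj x y then (nsite C x - 1) * (nsite C y - 1) else 0) := by
    have hterm : ∀ x y : V,
        (if G.Adj x y then ((nsite C x - 1) + (nsite C y - 1) - 1) else 0)
          ≤ (if G.Adj x y then (nsite C x - 1) * (nsite C y - 1) else 0) := by
      intro x y
      by_cases h : G.Adj x y <;> simp [h]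
      have h1 := nsite_le_two C x
      have h2 := nsite_le_two C y
      nlinarith [mul_nonneg (by linarith : (0:ℝ) ≤ 2 - nsite C x)
        (by linarith : (0:ℝ) ≤ 2 - nsite C y)]
    have hsplit : ∑ x : V, ∑ y : V,
        (if G.Adj x y then ((nsite C x - 1) + (nsite C y - 1) - 1) else 0)
        = (z : ℝ) * κ - 2 * z * E := by
      have h1 : ∀ x : V, ∑ y : V,
          (if G.Adj x y then ((nsite C x - 1) + (nsite C y - 1) - 1) else 0)
          = (z : ℝ) * (nsite C x - 1) - (z : ℝ) * 1
            + ∑ y : V, (if G.Adj x y then (nsite C y - 1) else 0) := by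
        intro x
        have e1 : ∀ y : V, (if G.Adj x y then ((nsite C x - 1) + (nsite C y - 1) - 1) else 0)
            = (if G.Adj x y then (nsite C x - 1) else 0)
              + (if G.Adj x y then (nsite C y - 1) else 0)
              - (if G.Adj x y then (1 : ℝ) else 0) := by
          intro y; by_cases h : G.Adj x y <;> simp [h]
        rw [Finset.sum_congr rfl fun y _ => e1 y]
        rw [Finset.sum_sub_distrib, Finset.sum_add_distrib,
          sum_adj_const G hreg x (nsite C x - 1), sum_adj_const G hreg x 1]
        ring
      rw [Finset.sum_congr rfl fun x _ => h1 x]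
      rw [Finset.sum_add_distrib, Finset.sum_sub_distrib]
      have hswap : ∑ x : V, ∑ y : V, (if G.Adj x y then (nsite C y - 1) else 0)
          = ∑ y : V, (z : ℝ) * (nsite C y - 1) := by
        rw [Finset.sum_comm]
        refine Finset.sum_congr rfl fun y _ => ?_
        have : ∀ x : V, (if G.Adj x y then (nsite C y - 1) else 0)
            = (if G.Adj y x then (nsite C y - 1) else 0) := by
          intro x; simp only [G.adj_comm]
        rw [Finset.sum_congr rfl fun x _ => this x, sum_adj_const G hreg y (nsite C y - 1)]
      rw [hswap]
      have hE1 : ∑ x : V, (z : ℝ) * (nsite C x - 1) = (z : ℝ) * (κ - E) := by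
        rw [← Finset.mul_sum]
        congr 1
        rw [hEdef, hκ]
        rw [Finset.sum_sub_distrib, Finset.sum_sub_distrib, Finset.sum_const, Finset.sum_const]
        simp; ring
      rw [hE1]
      simp [Finset.sum_const, hκ]
      ring
    calc (z : ℝ) * κ - 2 * z * E
        = ∑ x : V, ∑ y : V,
            (if G.Adj x y then ((nsite C x - 1) + (nsite C y - 1) - 1) else 0) := hsplit.symm
      _ ≤ _ := Finset.sum_le_sum fun x _ => Finset.sum_le_sum fun y _ => hterm x y
  -- particle number
  have hNi : Ni C = 2 * κ - E := by
    unfold Ni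
    have : ∀ x : V, ∑ σ : Fin 2, occ (C x σ) = nsite C x := fun x => rfl
    rw [Finset.sum_congr rfl fun x _ => this x]
    rw [hEdef, Finset.sum_sub_distrib, Finset.sum_const]
    simp [hκ]; ring
  -- values at the full configuration
  have hHgcF : Hgc G I W μ (fun _ _ => true)
      = 2 * I * (κ / 4) + W / 2 * (((z : ℝ) * κ) / 2) - μ * (2 * κ) := by
    unfold Hgc H0 Ni
    rw [Finset.sum_congr rfl fun x _ => pair_sum
      (fun p => (occ ((fun (_ : V) (_ : Fin 2) => true) x p.1) - 1 / 2) * (occ ((fun (_ : V) (_ : Fin 2) => true) x p.2) - 1 / 2))]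
    have h1 : ∀ x : V, ∑ y : V,
        (if G.Adj x y then (nsite (fun (_ : V) (_ : Fin 2) => true) x - (2:ℕ) / 2)
            * (nsite (fun (_ : V) (_ : Fin 2) => true) y - (2:ℕ) / 2) else 0) = (z : ℝ) * 1 := by
      intro x
      have : ∀ y : V, (if G.Adj x y then (nsite (fun (_ : V) (_ : Fin 2) => true) x - (2:ℕ) / 2)
            * (nsite (fun (_ : V) (_ : Fin 2) => true) y - (2:ℕ) / 2) else 0)
          = (if G.Adj x y then (1:ℝ) else 0) := by
        intro y
        by_cases h : G.Adj x y <;> simp [h, nsite_two, occ]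
      rw [Finset.sum_congr rfl fun y _ => this y, sum_adj_const G hreg x 1]
    rw [Finset.sum_congr rfl fun x _ => h1 x]
    simp [Finset.sum_const, occ, hκ]
    ring
  have hHgcC : Hgc G I W μ C
      = 2 * I * (∑ x : V, (occ (C x 0) - 1 / 2) * (occ (C x 1) - 1 / 2))
        + W / 2 * ((∑ x : V, ∑ y : V,
            (if G.Adj x y then (nsite C x - 1) * (nsite C y - 1) else 0)) / 2)
        - μ * Ni C := by
    unfold Hgc H0
    rw [Finset.sum_congr rfl fun x _ => pair_sum
      (fun p => (occ (C x p.1) - 1 / 2) * (occ (C x p.2) - 1 / 2))]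
    norm_num
  -- combine
  rw [hHgcF, hHgcC, hNi]
  have m1 : 2 * I * (κ / 4 - E / 2)
      ≤ 2 * I * (∑ x : V, (occ (C x 0) - 1 / 2) * (occ (C x 1) - 1 / 2)) :=
    mul_le_mul_of_nonneg_left hS1 (by linarith)
  have m2 : W / 2 * (((z : ℝ) * κ - 2 * z * E) / 2)
      ≤ W / 2 * ((∑ x : V, ∑ y : V,
          (if G.Adj x y then (nsite C x - 1) * (nsite C y - 1) else 0)) / 2) := by
    apply mul_le_mul_of_nonneg_left _ (by linarith)
    linarith [hDS]
  nlinarith [m1, m2]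

lemma deficit_nonneg (C : V → Fin 2 → Bool) : 0 ≤ ∑ x : V, (2 - nsite C x) :=
  Finset.sum_nonneg fun x _ => by linarith [nsite_le_two C x]

lemma deficit_pos (C : V → Fin 2 → Bool) (x : V) (σ : Fin 2) (h : C x σ = false) :
    0 < ∑ x : V, (2 - nsite C x) := by
  have h1 : (1 : ℝ) ≤ 2 - nsite C x := by
    have hσ : σ = 0 ∨ σ = 1 := by omega
    rcases hσ with hσ | hσ <;> subst hσ
    · have h0 : occ (C x 0) = 0 := by simp [occ, h]
      have := occ_le_one (C x 1)
      rw [nsite_two, h0]; linarith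
    · have h0 : occ (C x 1) = 0 := by simp [occ, h]
      have := occ_le_one (C x 0)
      rw [nsite_two, h0]; linarith
  calc (0:ℝ) < 2 - nsite C x := by linarith
    _ ≤ ∑ y : V, (2 - nsite C y) :=
      Finset.single_le_sum (f := fun y => 2 - nsite C y)
        (fun y _ => show (0:ℝ) ≤ 2 - nsite C y by linarith [nsite_le_two C y])
        (Finset.mem_univ x)

end Aux

/-- **Region D₊.** For `W > 0`, `I ≥ 0` and `μ > zW/2 + I`, the unique
minimizer of `H(C) = H_i^0(C) − μ·N_i(C)` is the fully occupied configuration. -/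
theorem statement18
    {V : Type*} [Fintype V] [DecidableEq V]
    (G : SimpleGraph V) [DecidableRel G.Adj]
    (z : ℕ) (hz : 2 ≤ z)
    (hreg : G.IsRegularOfDegree z) (hconn : G.Connected)
    (Λe Λo : Finset V)
    (hcover : ∀ v : V, v ∈ Λe ∨ v ∈ Λo) (hdisj : Disjoint Λe Λo)
    (hbip : ∀ x y : V, G.Adj x y → (x ∈ Λe ∧ y ∈ Λo) ∨ (x ∈ Λo ∧ y ∈ Λe))
    (I W μ : ℝ) (hW : 0 < W) (hI : 0 ≤ I) (hmu : (z : ℝ) * W / 2 + I < μ) :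
    {C : V → Fin 2 → Bool | ∀ C' : V → Fin 2 → Bool, Hgc G I W μ C ≤ Hgc G I W μ C'} =
      {fun _ _ => true} := by
  have hcoef : 0 < μ - I - (z : ℝ) * W / 2 := by linarith
  ext C
  simp only [Set.mem_setOf_eq, Set.mem_singleton_iff]
  constructor
  · intro hmin
    by_contra hne
    have hex : ∃ x σ, C x σ = false := by
      by_contra hall
      push_neg at hall
      apply hne
      funext x σ
      have := hall x σ
      exact eq_true_of_ne_false this
    obtain ⟨x, σ, hxσ⟩ := hex
    have hpos := deficit_pos C x σ hxσ
    have hk := key_bound G hreg I W μ hW.le hI C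
    have := hmin (fun _ _ => true)
    nlinarith [mul_pos hcoef hpos]
  · intro hC
    subst hC
    intro C'
    have hk := key_bound G hreg I W μ hW.le hI C'
    nlinarith [mul_nonneg hcoef.le (deficit_nonneg C')]
end

section
/- (Antiferromagnetic ordering of region B by the first-order effective coupling) Let r = 2. Assume W > 0, J > 0, I > zW/4, and |μ| < I + 2zJ. Then the perturbed Hamiltonian H_J(C) = H_i^0(C) − μ·N_i(C) + J Σ_{⟨x,y⟩} (s_{x,↑} s_{y,↑} + s_{x,↓} s_{y,↓}), where s_{x,σ} = 2 n_{x,σ} − 1, attains its minimum over all ion configurations at exactly two configurations: the two Néel configurations in which every site is singly occupied and the species alternates between the sublattices (n_{x,↑} = 1, n_{x,↓} = 0 on Λᵉ and n_{x,↑} = 0, n_{x,↓} = 1 on Λᵒ, or vice versa). In particular, the spin degeneracy 2^{|Λ|} of the unperturbed region B is completely removed. -/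
open Finset

/-- Perturbed grand-canonical Hamiltonian
`H_J(C) = H_i^0(C) − μ·N_i(C) + J Σ_{⟨x,y⟩} Σ_σ s_{x,σ} s_{y,σ}`, with
`s_{x,σ} = 2 n_{x,σ} − 1`; the edge sum is written as half the symmetric double sum. -/
noncomputable def HJ {V : Type*} [Fintype V] (G : SimpleGraph V) [DecidableRel G.Adj]
    (I W μ J : ℝ) (C : V → Fin 2 → Bool) : ℝ :=
  H0 G 2 I W C - μ * Ni C
  + J * ((∑ x : V, ∑ y : V,
      (if G.Adj x y then
        ∑ σ : Fin 2, (2 * occ (C x σ) - 1) * (2 * occ (C y σ) - 1) else 0)) / 2)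


namespace S19

def up : Fin 2 → Bool := fun σ => decide (σ = 0)
def dn : Fin 2 → Bool := fun σ => decide (σ ≠ 0)

lemma eq_up_iff (a : Fin 2 → Bool) : a = up ↔ (a 0 = true ∧ a 1 = false) := by
  constructor
  · rintro rfl; exact ⟨by decide, by decide⟩
  · rintro ⟨h0, h1⟩; funext σ; fin_cases σ <;> simp_all [up]

lemma eq_dn_iff (a : Fin 2 → Bool) : a = dn ↔ (a 0 = false ∧ a 1 = true) := by
  constructor
  · rintro rfl; exact ⟨by decide, by decide⟩
  · rintro ⟨h0, h1⟩; funext σ; fin_cases σ <;> simp_all [dn]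

noncomputable def fsite (I μ : ℝ) (a : Fin 2 → Bool) : ℝ :=
  2 * I * ((occ (a 0) - 1/2) * (occ (a 1) - 1/2)) - μ * (occ (a 0) + occ (a 1))

noncomputable def E (z : ℕ) (I W μ J : ℝ) (a b : Fin 2 → Bool) : ℝ :=
  (fsite I μ a + fsite I μ b) / z
  + W/2 * ((occ (a 0) + occ (a 1) - 1) * (occ (b 0) + occ (b 1) - 1))
  + J * ((2*occ (a 0)-1)*(2*occ (b 0)-1) + (2*occ (a 1)-1)*(2*occ (b 1)-1))

noncomputable def Emin (z : ℕ) (I μ J : ℝ) : ℝ := (-I - 2*μ) / z - 2*J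

lemma E_up_dn (z : ℕ) (I W μ J : ℝ) :
    E z I W μ J up dn = Emin z I μ J := by
  simp only [E, Emin, fsite, up, dn, occ]
  norm_num
  ring

lemma E_dn_up (z : ℕ) (I W μ J : ℝ) :
    E z I W μ J dn up = Emin z I μ J := by
  simp only [E, Emin, fsite, up, dn, occ]
  norm_num
  ring

set_option maxHeartbeats 2000000 in
lemma E_strict (z : ℕ) (hz : 2 ≤ z) (I W μ J : ℝ)
    (hW : 0 < W) (hJ : 0 < J) (hIW : (z : ℝ) * W / 4 < I)
    (hmu : |μ| < I + 2 * z * J) (a b : Fin 2 → Bool)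
    (hne : ¬((a = up ∧ b = dn) ∨ (a = dn ∧ b = up))) :
    Emin z I μ J < E z I W μ J a b := by
  have hζ : (0:ℝ) < (z:ℝ) := by positivity
  have hζ2 : (2:ℝ) ≤ (z:ℝ) := by exact_mod_cast hz
  have hm := abs_lt.mp hmu
  cases h0 : a 0 <;> cases h1 : a 1 <;> cases h2 : b 0 <;> cases h3 : b 1
  on_goal 7 => exact absurd (Or.inr ⟨(eq_dn_iff a).mpr ⟨h0, h1⟩, (eq_up_iff b).mpr ⟨h2, h3⟩⟩) hne
  on_goal 9 => exact absurd (Or.inl ⟨(eq_up_iff a).mpr ⟨h0, h1⟩, (eq_dn_iff b).mpr ⟨h2, h3⟩⟩) hne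
  all_goals
    simp only [E, Emin, fsite, occ, h0, h1, h2, h3, Bool.false_eq_true, if_true, if_false,
        ite_true, ite_false]
    rw [div_sub' hζ.ne', div_add' _ _ _ hζ.ne', div_add' _ _ _ hζ.ne',
        div_lt_div_iff₀ hζ hζ]
    nlinarith [mul_pos hζ hW, mul_pos hζ hJ, hm.1, hm.2, hζ2, mul_pos (mul_pos hζ hζ) hJ,
      mul_pos (mul_pos hζ hζ) hW, sq_nonneg ((z:ℝ)-2)]

lemma E_ge (z : ℕ) (hz : 2 ≤ z) (I W μ J : ℝ)
    (hW : 0 < W) (hJ : 0 < J) (hIW : (z : ℝ) * W / 4 < I)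
    (hmu : |μ| < I + 2 * z * J) (a b : Fin 2 → Bool) :
    Emin z I μ J ≤ E z I W μ J a b := by
  by_cases h : (a = up ∧ b = dn) ∨ (a = dn ∧ b = up)
  · rcases h with ⟨rfl, rfl⟩ | ⟨rfl, rfl⟩
    · rw [E_up_dn]
    · rw [E_dn_up]
  · exact (E_strict z hz I W μ J hW hJ hIW hmu a b h).le

variable {V : Type*} [Fintype V] (G : SimpleGraph V) [DecidableRel G.Adj]

lemma sum_adj_left {z : ℕ} (hreg : G.IsRegularOfDegree z) (f : V → ℝ) :
    ∑ x : V, ∑ y : V, (if G.Adj x y then f x else 0) = z * ∑ x : V, f x := by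
  rw [Finset.mul_sum]
  refine Finset.sum_congr rfl fun x _ => ?_
  rw [Finset.sum_ite, Finset.sum_const, Finset.sum_const_zero, add_zero, nsmul_eq_mul]
  congr 1
  rw [show Finset.univ.filter (fun y => G.Adj x y) = G.neighborFinset x from
    (SimpleGraph.neighborFinset_eq_filter G).symm]
  exact_mod_cast congrArg (Nat.cast (R := ℝ)) (hreg x)

lemma sum_adj_right {z : ℕ} (hreg : G.IsRegularOfDegree z) (f : V → ℝ) :
    ∑ x : V, ∑ y : V, (if G.Adj x y then f y else 0) = z * ∑ x : V, f x := by
  rw [Finset.sum_comm]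
  rw [← sum_adj_left G hreg f]
  refine Finset.sum_congr rfl fun y _ => Finset.sum_congr rfl fun x _ => ?_
  have h := G.adj_comm y x
  by_cases hh : G.Adj y x
  · rw [if_pos hh, if_pos (h.mp hh)]
  · rw [if_neg hh, if_neg (fun h' => hh (h.mpr h'))]

lemma HJ_eq_edge {z : ℕ} (hz : 0 < z) (hreg : G.IsRegularOfDegree z)
    (I W μ J : ℝ) (C : V → Fin 2 → Bool) :
    HJ G I W μ J C
      = (∑ x : V, ∑ y : V, (if G.Adj x y then E z I W μ J (C x) (C y) else 0)) / 2 := by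
  have hzr : ((z:ℝ)) ≠ 0 := by positivity
  have hsplit : ∀ x y : V, (if G.Adj x y then E z I W μ J (C x) (C y) else 0)
      = ((if G.Adj x y then fsite I μ (C x) else 0) / z
          + (if G.Adj x y then fsite I μ (C y) else 0) / z)
        + W/2 * (if G.Adj x y then
            (occ (C x 0) + occ (C x 1) - 1) * (occ (C y 0) + occ (C y 1) - 1) else 0)
        + J * (if G.Adj x y then
            (2*occ (C x 0)-1)*(2*occ (C y 0)-1) + (2*occ (C x 1)-1)*(2*occ (C y 1)-1) else 0) := by
    intro x y
    by_cases h : G.Adj x y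
    · simp only [if_pos h, E]; ring
    · simp only [if_neg h]; ring
  simp only [hsplit]
  simp only [Finset.sum_add_distrib]
  simp only [← Finset.sum_div, ← Finset.mul_sum]
  rw [sum_adj_left G hreg (fun x => fsite I μ (C x)),
      sum_adj_right G hreg (fun x => fsite I μ (C x))]
  simp only [HJ, H0, Ni, nsite, fsite,
    show (Finset.univ.filter (fun p : Fin 2 × Fin 2 => p.1 < p.2)) = {((0:Fin 2),(1:Fin 2))} from
      by decide,
    Finset.sum_singleton, Fin.sum_univ_two]
  push_cast
  rw [Finset.sum_sub_distrib, ← Finset.mul_sum, ← Finset.mul_sum]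
  field_simp
  ring

/-- A configuration is `good` if every edge carries a Néel pair. -/
def Good (C : V → Fin 2 → Bool) : Prop :=
  ∀ x y : V, G.Adj x y → (C x = up ∧ C y = dn) ∨ (C x = dn ∧ C y = up)

lemma sum_edge_good {C : V → Fin 2 → Bool} (hC : Good G C) (z : ℕ) (I W μ J : ℝ) :
    ∑ x : V, ∑ y : V, (if G.Adj x y then E z I W μ J (C x) (C y) else 0)
      = ∑ x : V, ∑ y : V, (if G.Adj x y then Emin z I μ J else 0) := by
  refine Finset.sum_congr rfl fun x _ => Finset.sum_congr rfl fun y _ => ?_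
  by_cases h : G.Adj x y
  · rw [if_pos h, if_pos h]
    rcases hC x y h with ⟨h1, h2⟩ | ⟨h1, h2⟩ <;> rw [h1, h2]
    · exact E_up_dn z I W μ J
    · exact E_dn_up z I W μ J
  · rw [if_neg h, if_neg h]

lemma HJ_good_le {z : ℕ} (hz : 2 ≤ z) (hreg : G.IsRegularOfDegree z)
    (I W μ J : ℝ) (hW : 0 < W) (hJ : 0 < J) (hIW : (z : ℝ) * W / 4 < I)
    (hmu : |μ| < I + 2 * z * J)
    {C : V → Fin 2 → Bool} (hC : Good G C) (C' : V → Fin 2 → Bool) :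
    HJ G I W μ J C ≤ HJ G I W μ J C' := by
  have hz0 : 0 < z := lt_of_lt_of_le (by norm_num) hz
  rw [HJ_eq_edge G hz0 hreg I W μ J C, HJ_eq_edge G hz0 hreg I W μ J C',
    sum_edge_good G hC z I W μ J]
  gcongr ?_ / 2
  refine Finset.sum_le_sum fun x _ => Finset.sum_le_sum fun y _ => ?_
  by_cases h : G.Adj x y
  · rw [if_pos h, if_pos h]
    exact E_ge z hz I W μ J hW hJ hIW hmu _ _
  · rw [if_neg h, if_neg h]

lemma HJ_good_lt {z : ℕ} (hz : 2 ≤ z) (hreg : G.IsRegularOfDegree z)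
    (I W μ J : ℝ) (hW : 0 < W) (hJ : 0 < J) (hIW : (z : ℝ) * W / 4 < I)
    (hmu : |μ| < I + 2 * z * J)
    {C C' : V → Fin 2 → Bool} (hC : Good G C) (hC' : ¬ Good G C') :
    HJ G I W μ J C < HJ G I W μ J C' := by
  have hz0 : 0 < z := lt_of_lt_of_le (by norm_num) hz
  rw [HJ_eq_edge G hz0 hreg I W μ J C, HJ_eq_edge G hz0 hreg I W μ J C',
    sum_edge_good G hC z I W μ J]
  have hle : ∀ x y : V, (if G.Adj x y then Emin z I μ J else 0)
      ≤ (if G.Adj x y then E z I W μ J (C' x) (C' y) else 0) := by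
    intro x y
    by_cases h : G.Adj x y
    · rw [if_pos h, if_pos h]; exact E_ge z hz I W μ J hW hJ hIW hmu _ _
    · rw [if_neg h, if_neg h]
  simp only [Good, not_forall] at hC'
  obtain ⟨x0, y0, hadj, hne⟩ := hC'
  have hlt : ∑ y : V, (if G.Adj x0 y then Emin z I μ J else 0)
      < ∑ y : V, (if G.Adj x0 y then E z I W μ J (C' x0) (C' y) else 0) := by
    refine Finset.sum_lt_sum (fun y _ => hle x0 y) ⟨y0, Finset.mem_univ y0, ?_⟩
    rw [if_pos hadj, if_pos hadj]
    exact E_strict z hz I W μ J hW hJ hIW hmu _ _ hne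
  have : ∑ x : V, ∑ y : V, (if G.Adj x y then Emin z I μ J else 0)
      < ∑ x : V, ∑ y : V, (if G.Adj x y then E z I W μ J (C' x) (C' y) else 0) := by
    refine Finset.sum_lt_sum (fun x _ => Finset.sum_le_sum fun y _ => hle x y)
      ⟨x0, Finset.mem_univ x0, hlt⟩
  linarith

end S19

/-- **antiferromagnetic ordering of region B.** For `W > 0`, `J > 0`,
`I > zW/4` and `|μ| < I + 2zJ`, the minimizers of `H_J` are exactly the two Néel
configurations in which every site is singly occupied and the species alternates
between the sublattices; in particular the `2^{|Λ|}` spin degeneracy is removed. -/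
theorem statement19
    {V : Type*} [Fintype V] [DecidableEq V]
    (G : SimpleGraph V) [DecidableRel G.Adj]
    (z : ℕ) (hz : 2 ≤ z)
    (hreg : G.IsRegularOfDegree z) (hconn : G.Connected)
    (Λe Λo : Finset V)
    (hcover : ∀ v : V, v ∈ Λe ∨ v ∈ Λo) (hdisj : Disjoint Λe Λo)
    (hbip : ∀ x y : V, G.Adj x y → (x ∈ Λe ∧ y ∈ Λo) ∨ (x ∈ Λo ∧ y ∈ Λe))
    (I W μ J : ℝ) (hW : 0 < W) (hJ : 0 < J) (hIW : (z : ℝ) * W / 4 < I)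
    (hmu : |μ| < I + 2 * z * J) :
    {C : V → Fin 2 → Bool | ∀ C' : V → Fin 2 → Bool, HJ G I W μ J C ≤ HJ G I W μ J C'} =
      {fun x σ => decide ((x ∈ Λe) ↔ σ = 0), fun x σ => decide ((x ∈ Λo) ↔ σ = 0)} ∧
    (fun (x : V) (σ : Fin 2) => decide ((x ∈ Λe) ↔ σ = 0)) ≠
      (fun (x : V) (σ : Fin 2) => decide ((x ∈ Λo) ↔ σ = 0)) := by
  classical
  have hz0 : 0 < z := lt_of_lt_of_le (by norm_num) hz
  obtain ⟨v0⟩ := hconn.nonempty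
  set Ce : V → Fin 2 → Bool := fun x σ => decide ((x ∈ Λe) ↔ σ = 0) with hCe
  set Co : V → Fin 2 → Bool := fun x σ => decide ((x ∈ Λo) ↔ σ = 0) with hCo
  have hoe : ∀ x : V, x ∈ Λo → x ∉ Λe := fun x hx => Finset.disjoint_right.mp hdisj hx
  have heo : ∀ x : V, x ∈ Λe → x ∉ Λo := fun x hx => Finset.disjoint_left.mp hdisj hx
  have hne_o : ∀ x : V, x ∉ Λe → x ∈ Λo := fun x hx => (hcover x).resolve_left hx
  have hCe_up : ∀ x : V, x ∈ Λe → Ce x = S19.up := by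
    intro x hx; funext σ; simp [hCe, S19.up, hx]
  have hCe_dn : ∀ x : V, x ∉ Λe → Ce x = S19.dn := by
    intro x hx; funext σ; simp [hCe, S19.dn, hx]
  have hCo_up : ∀ x : V, x ∉ Λe → Co x = S19.up := by
    intro x hx; funext σ; simp [hCo, S19.up, hne_o x hx]
  have hCo_dn : ∀ x : V, x ∈ Λe → Co x = S19.dn := by
    intro x hx; funext σ; simp [hCo, S19.dn, heo x hx]
  have good_Ce : S19.Good G Ce := by
    intro x y hadj
    rcases hbip x y hadj with ⟨hx, hy⟩ | ⟨hx, hy⟩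
    · exact Or.inl ⟨hCe_up x hx, hCe_dn y (hoe y hy)⟩
    · exact Or.inr ⟨hCe_dn x (hoe x hx), hCe_up y hy⟩
  have good_Co : S19.Good G Co := by
    intro x y hadj
    rcases hbip x y hadj with ⟨hx, hy⟩ | ⟨hx, hy⟩
    · exact Or.inr ⟨hCo_dn x hx, hCo_up y (hoe y hy)⟩
    · exact Or.inl ⟨hCo_up x (hoe x hx), hCo_dn y hy⟩
  have hdu : S19.dn ≠ S19.up := by decide
  have hud : S19.up ≠ S19.dn := by decide
  constructor
  · ext C
    simp only [Set.mem_setOf_eq, Set.mem_insert_iff, Set.mem_singleton_iff]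
    constructor
    · intro hmin
      have hgood : S19.Good G C := by
        by_contra hng
        exact absurd (hmin Ce)
          (not_le.mpr (S19.HJ_good_lt G hz hreg I W μ J hW hJ hIW hmu good_Ce hng))
      -- neighbor existence
      have hnb : ∀ x : V, ∃ y : V, G.Adj x y := by
        intro x
        have hdeg : 0 < G.degree x := by rw [hreg x]; exact hz0
        obtain ⟨y, hy⟩ := Finset.card_pos.mp hdeg
        exact ⟨y, (SimpleGraph.mem_neighborFinset G x y).mp hy⟩
      have hCx_cases : ∀ x : V, C x = S19.up ∨ C x = S19.dn := by
        intro x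
        obtain ⟨y, hy⟩ := hnb x
        rcases hgood x y hy with ⟨h, _⟩ | ⟨h, _⟩
        · exact Or.inl h
        · exact Or.inr h
      have hP : ∀ x y : V, G.Adj x y →
          ((C x = S19.up ↔ x ∈ Λe) ↔ (C y = S19.up ↔ y ∈ Λe)) := by
        intro x y h
        rcases hgood x y h with ⟨h1, h2⟩ | ⟨h1, h2⟩ <;>
          rcases hbip x y h with ⟨hx, hy⟩ | ⟨hx, hy⟩
        · have hy' : y ∉ Λe := hoe y hy
          simp [h1, h2, hx, hy', hdu]
        · have hx' : x ∉ Λe := hoe x hx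
          simp [h1, h2, hx', hy, hdu]
        · have hy' : y ∉ Λe := hoe y hy
          simp [h1, h2, hx, hy', hdu]
        · have hx' : x ∉ Λe := hoe x hx
          simp [h1, h2, hx', hy, hdu]
      have htrans : ∀ x y : V, G.Reachable x y →
          ((C x = S19.up ↔ x ∈ Λe) ↔ (C y = S19.up ↔ y ∈ Λe)) := by
        intro x y hxy
        obtain ⟨w⟩ := hxy
        induction w with
        | nil => exact Iff.rfl
        | cons h p ih => exact (hP _ _ h).trans ih
      by_cases hv0 : C v0 = S19.up ↔ v0 ∈ Λe
      · left
        funext x σ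
        have hPx : C x = S19.up ↔ x ∈ Λe :=
          (htrans x v0 (hconn.preconnected x v0)).mpr hv0
        by_cases hxe : x ∈ Λe
        · rw [hPx.mpr hxe]; simp [hCe, S19.up, hxe]
        · rw [(hCx_cases x).resolve_left (fun h => hxe (hPx.mp h))]
          simp [hCe, S19.dn, hxe]
      · right
        funext x σ
        have hPx : ¬(C x = S19.up ↔ x ∈ Λe) :=
          fun h => hv0 ((htrans x v0 (hconn.preconnected x v0)).mp h)
        by_cases hxe : x ∈ Λe
        · have hdn : C x = S19.dn := by
            rcases hCx_cases x with h | h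
            · exact absurd (iff_of_true h hxe) hPx
            · exact h
          rw [hdn]; simp [hCo, S19.dn, heo x hxe]
        · have hup : C x = S19.up := by
            rcases hCx_cases x with h | h
            · exact h
            · exact absurd (iff_of_false (h ▸ hdu) hxe) hPx
          rw [hup]; simp [hCo, S19.up, hne_o x hxe]
    · rintro (rfl | rfl) <;> intro C'
      · exact S19.HJ_good_le G hz hreg I W μ J hW hJ hIW hmu good_Ce C'
      · exact S19.HJ_good_le G hz hreg I W μ J hW hJ hIW hmu good_Co C'
  · intro h
    have h0 := congrFun (congrFun h v0) 0
    have hiff : (v0 ∈ Λe) ↔ (v0 ∈ Λo) := by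
      simpa [hCe, hCo, decide_eq_decide] using h0
    rcases hcover v0 with hv | hv
    · exact heo v0 hv (hiff.mp hv)
    · exact hoe v0 hv (hiff.mpr hv)
end
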